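/- The minimum cost of a 2-club cover of a graph G equals 2ccedvs(G), the minimum length of a sequence of edge deletions and vertex splits turning G into a disjoint union of 2-clubs. -/

import Mathlib

open SimpleGraph

/-- `H` is obtained from `G` by splitting vertex `v` into two copies `v` and `v'`
(where `v'` was an isolated vertex), with `N(v₁) ∪ N(v₂) = N(v)`. -/
def IsSplitAt {V : Type*} (v v' : V) (G H : SimpleGraph V) : Prop :=
  v ≠ v' ∧ G.neighborSet v' = ∅ ∧ ¬ H.Adj v v' ∧
  (∀ x y : V, x ≠ v → x ≠ v' → y ≠ v → y ≠ v' → (H.Adj x y ↔ G.Adj x y)) ∧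
  (∀ x : V, x ≠ v → x ≠ v' → ((H.Adj v x ∨ H.Adj v' x) ↔ G.Adj v x))

/-- `H` is obtained from `G` by a single vertex split. -/
def IsSplit {V : Type*} (G H : SimpleGraph V) : Prop :=
  ∃ v v', IsSplitAt v v' G H

/-- `H` is obtained from `G` by deleting a single (existing) edge. -/
def IsEdgeDeletion {V : Type*} (G H : SimpleGraph V) : Prop :=
  ∃ u v : V, G.Adj u v ∧ H = G.deleteEdges {s(u, v)}

/-- Editing operations: edge deletion, or vertex split (recording the split vertex
and the name of the new copy). -/
inductive Op where
  | del : ℕ → ℕ → Op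
  | split : ℕ → ℕ → Op

/-- Semantics of one operation. -/
def OpApplies : Op → SimpleGraph ℕ → SimpleGraph ℕ → Prop
  | Op.del u v, G, H => G.Adj u v ∧ H = G.deleteEdges {s(u, v)}
  | Op.split v v', G, H => IsSplitAt v v' G H

/-- Applying a list of operations in order. -/
def OpsApply : List Op → SimpleGraph ℕ → SimpleGraph ℕ → Prop
  | [], G, H => H = G
  | o :: l, G, H => ∃ G', OpApplies o G G' ∧ OpsApply l G' H

def IsSplitOp : Op → Prop
  | Op.split _ _ => True
  | Op.del _ _ => False

/-- The set of vertices on which a split is performed in the list of operations. -/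
def splitVerts (l : List Op) : Set ℕ := {v | ∃ v', Op.split v v' ∈ l}

/-- `G` is a disjoint union of 2-clubs: within each connected component all
distances are at most 2. -/
def Is2ClubGraph (G : SimpleGraph ℕ) : Prop :=
  ∀ u v : ℕ, G.Reachable u v → G.dist u v ≤ 2

/-- Minimum number of vertex splits turning `G` into a disjoint union of 2-clubs. -/
noncomputable def twoCcvs (G : SimpleGraph ℕ) : ℕ :=
  sInf {k | ∃ l H, l.length = k ∧ (∀ o ∈ l, IsSplitOp o) ∧ OpsApply l G H ∧ Is2ClubGraph H}

/-- Minimum number of edge deletions and vertex splits turning `G` into a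
disjoint union of 2-clubs. -/
noncomputable def twoCcedvs (G : SimpleGraph ℕ) : ℕ :=
  sInf {k | ∃ l H, l.length = k ∧ OpsApply l G H ∧ Is2ClubGraph H}

/-- The subgraph of `G` induced on `s` (kept on the same vertex type, all
vertices outside `s` becoming isolated). -/
def inducedOn (G : SimpleGraph ℕ) (s : Set ℕ) : SimpleGraph ℕ where
  Adj x y := G.Adj x y ∧ x ∈ s ∧ y ∈ s
  symm := ⟨fun x y h => ⟨h.1.symm, h.2.2, h.2.1⟩⟩
  loopless := ⟨fun x h => G.loopless.irrefl x h.1⟩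

/-- The set `s` induces a 2-club in `G` (connected, diameter at most 2). -/
def Inducing2Club (G : SimpleGraph ℕ) (s : Set ℕ) : Prop :=
  ∀ u ∈ s, ∀ v ∈ s, (inducedOn G s).Reachable u v ∧ (inducedOn G s).dist u v ≤ 2

/-- The path with vertices `0, 1, …, m` (length `m`). -/
def pathG (m : ℕ) : SimpleGraph ℕ :=
  SimpleGraph.fromRel (fun i j => j = i + 1 ∧ j ≤ m)

/-- The cycle with vertices `0, 1, …, n-1`. -/
def cycleG (n : ℕ) : SimpleGraph ℕ :=
  SimpleGraph.fromRel (fun i j => i < n ∧ j = (i + 1) % n)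

/-- Total cost of a 2-club cover: each vertex pays (multiplicity − 1), each edge
not contained in some set of the cover pays 1. -/
noncomputable def coverCost (G : SimpleGraph ℕ) (C : Finset (Finset ℕ)) : ℕ :=
  (∑ v ∈ C.sup id, ((C.filter (fun S => v ∈ S)).card - 1)) +
    Set.ncard {e : Sym2 ℕ | e ∈ G.edgeSet ∧ ¬ ∃ S ∈ C, ∀ x ∈ e, x ∈ S}

/-- `C` is a 2-club cover of `G`: it covers the vertices of `G` and each set
induces a 2-club. -/
def Is2ClubCover (G : SimpleGraph ℕ) (C : Finset (Finset ℕ)) : Prop :=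
  (∀ v ∈ G.support, ∃ S ∈ C, v ∈ S) ∧ ∀ S ∈ C, Inducing2Club G (↑S : Set ℕ)

lemma edgeSet_finite_of_support {G : SimpleGraph ℕ} (h : G.support.Finite) : G.edgeSet.Finite := by
  apply Set.Finite.subset ((h.prod h).image (Function.uncurry Sym2.mk))
  intro e he
  induction e using Sym2.ind with
  | _ a b =>
    exact ⟨(a, b), ⟨⟨b, G.mem_edgeSet.mp he⟩, ⟨a, (G.mem_edgeSet.mp he).symm⟩⟩, rfl⟩

lemma opsApply_append {l₁ l₂ : List Op} {G G' H : SimpleGraph ℕ}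
    (h₁ : OpsApply l₁ G G') (h₂ : OpsApply l₂ G' H) : OpsApply (l₁ ++ l₂) G H := by
  induction l₁ generalizing G with
  | nil =>
    have : G' = G := h₁
    simpa [this] using h₂
  | cons o l ih =>
    obtain ⟨G₁, ho, hl⟩ := h₁
    exact ⟨G₁, ho, ih hl⟩

lemma walk_map_le {A B : SimpleGraph ℕ} (f : ℕ → ℕ) (K : Set ℕ)
    (hK : ∀ x y, x ∈ K → A.Adj x y → y ∈ K)
    (hf : ∀ x y, x ∈ K → y ∈ K → A.Adj x y → B.Adj (f x) (f y)) :
    ∀ {x y : ℕ} (p : A.Walk x y), x ∈ K → ∃ q : B.Walk (f x) (f y), q.length ≤ p.length := by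
  intro x y p
  induction p with
  | nil => exact fun _ => ⟨SimpleGraph.Walk.nil, le_rfl⟩
  | @cons a b c h p ih =>
    intro hx
    obtain ⟨q, hq⟩ := ih (hK _ _ hx h)
    exact ⟨SimpleGraph.Walk.cons (hf _ _ hx (hK _ _ hx h) h) q, by
      simpa using Nat.succ_le_succ hq⟩

lemma reach_dist_le {A B : SimpleGraph ℕ} (f : ℕ → ℕ) (K : Set ℕ)
    (hK : ∀ x y, x ∈ K → A.Adj x y → y ∈ K)
    (hf : ∀ x y, x ∈ K → y ∈ K → A.Adj x y → B.Adj (f x) (f y)) {x y : ℕ}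
    (hx : x ∈ K) (hr : A.Reachable x y) :
    B.Reachable (f x) (f y) ∧ B.dist (f x) (f y) ≤ A.dist x y := by
  obtain ⟨p, hp⟩ := hr.exists_walk_length_eq_dist
  obtain ⟨q, hq⟩ := walk_map_le f K hK hf p hx
  exact ⟨⟨q⟩, le_trans (SimpleGraph.dist_le q) (hp ▸ hq)⟩

def lostSet (G H : SimpleGraph ℕ) (ρ : ℕ → ℕ) : Set (Sym2 ℕ) :=
  {e | e ∈ G.edgeSet ∧ ∀ a b, H.Adj a b → Sym2.map ρ s(a, b) ≠ e}

lemma split_proj {v v' : ℕ} {G G₁ : SimpleGraph ℕ} (h : IsSplitAt v v' G G₁) :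
    ∀ {x y}, G₁.Adj x y → G.Adj (if x = v' then v else x) (if y = v' then v else y) := by
  obtain ⟨hne, hiso, hnadj, hmid, huni⟩ := h
  have aux : ∀ x y, G₁.Adj x y → x ≠ v' → G.Adj x (if y = v' then v else y) := by
    intro x y hxy hx'
    by_cases hy' : y = v'
    · rw [if_pos hy']
      by_cases hx : x = v
      · exact absurd (hy' ▸ hx ▸ hxy) hnadj
      · exact ((huni x hx hx').mp (Or.inr (hy' ▸ hxy).symm)).symm
    · rw [if_neg hy']
      by_cases hx : x = v
      · have hy : y ≠ v := fun hh => hxy.ne (hh ▸ hx ▸ rfl)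
        have := (huni y hy hy').mp (Or.inl (hx ▸ hxy))
        exact hx ▸ this
      · by_cases hy : y = v
        · have := (huni x hx hx').mp (Or.inl (hy ▸ hxy).symm)
          exact (hy ▸ this.symm : _)
        · exact (hmid x y hx hx' hy hy').mp hxy
  intro x y hxy
  by_cases hx' : x = v'
  · rw [if_pos hx']
    by_cases hy' : y = v'
    · exact absurd (hy' ▸ hx' ▸ hxy).ne (fun hh => hh rfl)
    · rw [if_neg hy']
      by_cases hy : y = v
      · exact absurd (hy ▸ hx' ▸ hxy).symm hnadj
      · exact (huni y hy hy').mp (Or.inr (hx' ▸ hxy))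
  · rw [if_neg hx']
    exact aux x y hxy hx'

lemma split_lift {v v' : ℕ} {G G₁ : SimpleGraph ℕ} (h : IsSplitAt v v' G G₁) :
    ∀ {x y}, G.Adj x y → ∃ a b, (if a = v' then v else a) = x ∧ (if b = v' then v else b) = y ∧
      G₁.Adj a b := by
  obtain ⟨hne, hiso, hnadj, hmid, huni⟩ := h
  have aux : ∀ x y, G.Adj x y → x = v → ∃ a b, (if a = v' then v else a) = x ∧
      (if b = v' then v else b) = y ∧ G₁.Adj a b := by
    intro x y hxy hx
    have hy' : y ≠ v' := by
      rintro rfl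
      exact Set.eq_empty_iff_forall_notMem.mp hiso x hxy.symm
    have hy : y ≠ v := fun hh => hxy.ne (hx ▸ hh ▸ rfl)
    rcases (huni y hy hy').mpr (hx ▸ hxy) with h1 | h1
    · exact ⟨v, y, by rw [if_neg hne]; exact hx.symm, by rw [if_neg hy'], h1⟩
    · exact ⟨v', y, by rw [if_pos rfl]; exact hx.symm, by rw [if_neg hy'], h1⟩
  intro x y hxy
  have hx' : x ≠ v' := by
    rintro rfl
    exact Set.eq_empty_iff_forall_notMem.mp hiso y hxy
  have hy' : y ≠ v' := by
    rintro rfl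
    exact Set.eq_empty_iff_forall_notMem.mp hiso x hxy.symm
  by_cases hx : x = v
  · exact aux x y hxy hx
  · by_cases hy : y = v
    · obtain ⟨a, b, ha, hb, hab⟩ := aux y x hxy.symm hy
      exact ⟨b, a, hb, ha, hab.symm⟩
    · exact ⟨x, y, by rw [if_neg hx'], by rw [if_neg hy'], (hmid x y hx hx' hy hy').mpr hxy⟩

lemma support_split {v v' : ℕ} {G G₁ : SimpleGraph ℕ} (h : IsSplitAt v v' G G₁) :
    G₁.support ⊆ G.support ∪ {v'} := by
  intro a ⟨b, hab⟩
  by_cases ha : a = v'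
  · exact Or.inr ha
  · left
    have := split_proj h hab
    rw [if_neg ha] at this
    exact ⟨_, this⟩

lemma opsInv : ∀ (l : List Op) (G H : SimpleGraph ℕ), OpsApply l G H → G.support.Finite →
    ∃ (ρ : ℕ → ℕ) (F : Finset ℕ),
      (∀ x, x ∉ F → ρ x = x) ∧
      (∀ a b, H.Adj a b → G.Adj (ρ a) (ρ b)) ∧
      (lostSet G H ρ).ncard + F.card ≤ l.length := by
  intro l
  induction l with
  | nil =>
    intro G H h _
    cases h
    refine ⟨id, ∅, fun x _ => rfl, fun a b hab => hab, ?_⟩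
    have : lostSet G G id = ∅ := by
      rw [Set.eq_empty_iff_forall_notMem]
      intro e he
      induction e using Sym2.ind with
      | _ a b =>
        exact he.2 a b (G.mem_edgeSet.mp he.1) (by simp)
    simp [this]
  | cons o lt ih =>
    intro G H h hfin
    obtain ⟨G₁, ho, hrest⟩ := h
    match o with
    | Op.del u w =>
      obtain ⟨hadj, rfl⟩ := ho
      have hle : G.deleteEdges {s(u, w)} ≤ G := SimpleGraph.deleteEdges_le _
      have hfin₁ : (G.deleteEdges {s(u, w)}).support.Finite :=
        hfin.subset (SimpleGraph.support_mono hle)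
      obtain ⟨ρ, F, h3, h1, h2⟩ := ih _ _ hrest hfin₁
      refine ⟨ρ, F, h3, fun a b hab => hle (h1 a b hab), ?_⟩
      have hsub : lostSet G H ρ ⊆ insert s(u, w) (lostSet (G.deleteEdges {s(u, w)}) H ρ) := by
        rintro e ⟨heE, hlost⟩
        by_cases he : e = s(u, w)
        · exact Or.inl he
        · refine Or.inr ⟨?_, hlost⟩
          rw [SimpleGraph.edgeSet_deleteEdges]
          exact ⟨heE, by simpa using he⟩
      have hfl : (lostSet (G.deleteEdges {s(u, w)}) H ρ).Finite :=
        (edgeSet_finite_of_support hfin₁).subset (fun e he => he.1)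
      calc (lostSet G H ρ).ncard + F.card
          ≤ (insert s(u, w) (lostSet (G.deleteEdges {s(u, w)}) H ρ)).ncard + F.card := by
            exact Nat.add_le_add_right (Set.ncard_le_ncard hsub (hfl.insert _)) _
        _ ≤ ((lostSet (G.deleteEdges {s(u, w)}) H ρ).ncard + 1) + F.card := by
            exact Nat.add_le_add_right (Set.ncard_insert_le _ _) _
        _ ≤ lt.length + 1 := by omega
        _ = (Op.del u w :: lt).length := by simp
    | Op.split v v' =>
      have hsp : IsSplitAt v v' G G₁ := ho
      have hfin₁ : G₁.support.Finite := (hfin.union (Set.finite_singleton v')).subset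
        (support_split hsp)
      obtain ⟨ρ₁, F₁, h3, h1, h2⟩ := ih _ _ hrest hfin₁
      set σ : ℕ → ℕ := fun x => if x = v' then v else x with hσ
      refine ⟨σ ∘ ρ₁, insert v' F₁, ?_, ?_, ?_⟩
      · intro x hx
        have hx1 : x ∉ F₁ := fun hh => hx (Finset.mem_insert_of_mem hh)
        have hx2 : x ≠ v' := fun hh => hx (hh ▸ Finset.mem_insert_self _ _)
        simp [h3 x hx1, hσ, hx2]
      · intro a b hab
        exact split_proj hsp (h1 a b hab)
      · have hsub : lostSet G H (σ ∘ ρ₁) ⊆ Sym2.map σ '' lostSet G₁ H ρ₁ := by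
          intro e he
          induction e using Sym2.ind with
          | _ x y =>
            obtain ⟨heE, hlost⟩ := he
            obtain ⟨a, b, ha, hb, hab⟩ := split_lift hsp (G.mem_edgeSet.mp heE)
            refine ⟨s(a, b), ⟨G₁.mem_edgeSet.mpr hab, ?_⟩, ?_⟩
            · intro c d hcd hmap
              apply hlost c d hcd
              rw [← Sym2.map_map, hmap, Sym2.map_pair_eq]
              simp only [hσ]
              rw [ha, hb]
            · rw [Sym2.map_pair_eq]
              simp only [hσ]
              rw [ha, hb]
        have hfl : (lostSet G₁ H ρ₁).Finite :=
          (edgeSet_finite_of_support hfin₁).subset (fun e he => he.1)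
        calc (lostSet G H (σ ∘ ρ₁)).ncard + (insert v' F₁).card
            ≤ (Sym2.map σ '' lostSet G₁ H ρ₁).ncard + (F₁.card + 1) := by
              exact Nat.add_le_add (Set.ncard_le_ncard hsub (hfl.image _))
                (Finset.card_insert_le _ _)
          _ ≤ (lostSet G₁ H ρ₁).ncard + (F₁.card + 1) := by
              exact Nat.add_le_add_right (Set.ncard_image_le hfl) _
          _ ≤ lt.length + 1 := by omega
          _ = (Op.split v v' :: lt).length := by simp

/-! ### Part C : from a cover to an operation sequence -/

noncomputable def canS (C : Finset (Finset ℕ)) (v : ℕ) : Finset ℕ :=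
  if h : ∃ S ∈ C, v ∈ S then h.choose else ∅

lemma canS_spec {C : Finset (Finset ℕ)} {v : ℕ} (h : ∃ S ∈ C, v ∈ S) :
    canS C v ∈ C ∧ v ∈ canS C v := by
  rw [canS, dif_pos h]
  exact ⟨h.choose_spec.1, h.choose_spec.2⟩

def bigB (C : Finset (Finset ℕ)) : ℕ := (C.sup id).sup id

lemma le_bigB {C : Finset (Finset ℕ)} {v : ℕ} {S : Finset ℕ} (hS : S ∈ C) (hv : v ∈ S) :
    v ≤ bigB C :=
  Finset.le_sup (f := id) (Finset.mem_sup.mpr ⟨S, hS, hv⟩)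

noncomputable def cname (C : Finset (Finset ℕ)) (p : ℕ × Finset ℕ) : ℕ :=
  bigB C + 1 + Nat.pair p.1 (Encodable.encode p.2)

lemma cname_gt (C : Finset (Finset ℕ)) (p : ℕ × Finset ℕ) : bigB C < cname C p := by
  rw [cname]; omega

lemma cname_inj {C : Finset (Finset ℕ)} {p q : ℕ × Finset ℕ} (h : cname C p = cname C q) :
    p = q := by
  rw [cname, cname] at h
  have h2 : Nat.pair p.1 (Encodable.encode p.2) = Nat.pair q.1 (Encodable.encode q.2) := by omega
  rw [Nat.pair_eq_pair] at h2
  have := Encodable.encode_injective h2.2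
  exact Prod.ext h2.1 this

noncomputable def nmF (C : Finset (Finset ℕ)) (D : Finset (ℕ × Finset ℕ)) (u : ℕ)
    (S : Finset ℕ) : ℕ :=
  if (u, S) ∈ D then cname C (u, S) else u

lemma nmF_of_mem {C : Finset (Finset ℕ)} {D : Finset (ℕ × Finset ℕ)} {u : ℕ} {S : Finset ℕ}
    (h : (u, S) ∈ D) : nmF C D u S = cname C (u, S) := by
  rw [nmF, if_pos h]

lemma nmF_of_not_mem {C : Finset (Finset ℕ)} {D : Finset (ℕ × Finset ℕ)} {u : ℕ} {S : Finset ℕ}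
    (h : (u, S) ∉ D) : nmF C D u S = u := by
  rw [nmF, if_neg h]

lemma nmF_insert_ne {C : Finset (Finset ℕ)} {D : Finset (ℕ × Finset ℕ)} {p : ℕ × Finset ℕ}
    {u : ℕ} {S : Finset ℕ} (h : (u, S) ≠ p) : nmF C (insert p D) u S = nmF C D u S := by
  by_cases hD : (u, S) ∈ D
  · rw [nmF_of_mem hD, nmF_of_mem (Finset.mem_insert_of_mem hD)]
  · rw [nmF_of_not_mem hD, nmF_of_not_mem (by simp [Finset.mem_insert, h, hD])]

/-- If the name is a "low" number (an original vertex), it is untouched. -/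
lemma nmF_low {C : Finset (Finset ℕ)} {D : Finset (ℕ × Finset ℕ)} {u v : ℕ} {S : Finset ℕ}
    (h : nmF C D u S = v) (hv : v ≤ bigB C) : u = v ∧ (u, S) ∉ D := by
  by_cases hD : (u, S) ∈ D
  · rw [nmF_of_mem hD] at h
    exact absurd (h ▸ cname_gt C (u, S)) (by omega)
  · rw [nmF_of_not_mem hD] at h
    exact ⟨h, hD⟩

lemma nmF_high {C : Finset (Finset ℕ)} {D : Finset (ℕ × Finset ℕ)} {u : ℕ} {S : Finset ℕ}
    {q : ℕ × Finset ℕ} (h : nmF C D u S = cname C q) (hu : u ≤ bigB C) :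
    (u, S) = q ∧ (u, S) ∈ D := by
  by_cases hD : (u, S) ∈ D
  · rw [nmF_of_mem hD] at h
    exact ⟨cname_inj h, hD⟩
  · rw [nmF_of_not_mem hD] at h
    exact absurd (h ▸ cname_gt C q) (by omega)

def graphAt (G : SimpleGraph ℕ) (C : Finset (Finset ℕ)) (D : Finset (ℕ × Finset ℕ)) :
    SimpleGraph ℕ where
  Adj a b := a ≠ b ∧ ∃ S ∈ C, ∃ u ∈ S, ∃ w ∈ S, G.Adj u w ∧ a = nmF C D u S ∧ b = nmF C D w S
  symm := ⟨by
    rintro a b ⟨hne, S, hS, u, hu, w, hw, hadj, ha, hb⟩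
    exact ⟨hne.symm, S, hS, w, hw, u, hu, hadj.symm, hb, ha⟩⟩
  loopless := ⟨fun a h => h.1 rfl⟩

noncomputable def pairsP (C : Finset (Finset ℕ)) : Finset (ℕ × Finset ℕ) :=
  ((C.sup id) ×ˢ C).filter (fun p => p.1 ∈ p.2 ∧ p.2 ≠ canS C p.1)

lemma mem_pairsP {C : Finset (Finset ℕ)} {p : ℕ × Finset ℕ} :
    p ∈ pairsP C ↔ p.2 ∈ C ∧ p.1 ∈ p.2 ∧ p.2 ≠ canS C p.1 := by
  rw [pairsP, Finset.mem_filter, Finset.mem_product]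
  constructor
  · rintro ⟨⟨_, h2⟩, h3, h4⟩; exact ⟨h2, h3, h4⟩
  · rintro ⟨h2, h3, h4⟩
    exact ⟨⟨Finset.mem_sup.mpr ⟨p.2, h2, h3⟩, h2⟩, h3, h4⟩

/-- Key "unique name" lemma at a processed stage. -/
lemma nmF_inj {C : Finset (Finset ℕ)} {D : Finset (ℕ × Finset ℕ)}
    {u u' : ℕ} {S S' : Finset ℕ} (hS : S ∈ C) (hu : u ∈ S) (hS' : S' ∈ C) (hu' : u' ∈ S')
    (hDP : ∀ q, q.2 ∈ C → q.1 ∈ q.2 → q.2 ≠ canS C q.1 → q ∈ D)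
    (h : nmF C D u S = nmF C D u' S') : u = u' ∧ S = S' := by
  by_cases hD : (u, S) ∈ D
  · rw [nmF_of_mem hD] at h
    obtain ⟨heq, _⟩ := nmF_high h.symm (le_bigB hS' hu')
    exact ⟨(Prod.ext_iff.mp heq).1.symm, (Prod.ext_iff.mp heq).2.symm⟩
  · rw [nmF_of_not_mem hD] at h
    obtain ⟨heq, hD'⟩ := nmF_low h.symm (le_bigB hS hu)
    have hScan : S = canS C u := by
      by_contra hne
      exact hD (hDP (u, S) hS hu hne)
    have hScan' : S' = canS C u' := by
      by_contra hne
      exact hD' (hDP (u', S') hS' hu' hne)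
    subst heq
    exact ⟨rfl, hScan.trans hScan'.symm⟩

/-- The single split step. -/
lemma split_step (G : SimpleGraph ℕ) (C : Finset (Finset ℕ)) (D : Finset (ℕ × Finset ℕ))
    {p : ℕ × Finset ℕ} (hp : p ∈ pairsP C) (hpD : p ∉ D) :
    IsSplitAt p.1 (cname C p) (graphAt G C D) (graphAt G C (insert p D)) := by
  obtain ⟨v, S₀⟩ := p
  obtain ⟨hS₀C, hvS₀, -⟩ := mem_pairsP.mp hp
  dsimp only at hS₀C hvS₀
  show IsSplitAt v (cname C (v, S₀)) _ _
  have hvB : v ≤ bigB C := le_bigB hS₀C hvS₀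
  have hvc : v ≠ cname C (v, S₀) := by
    intro h
    have := cname_gt C (v, S₀)
    omega
  refine ⟨hvc, ?_, ?_, ?_, ?_⟩
  · -- the new copy is isolated
    rw [Set.eq_empty_iff_forall_notMem]
    rintro x ⟨hne, S, hS, u, hu, w, hw, hadj, ha, hb⟩
    obtain ⟨heq, hmem⟩ := nmF_high ha.symm (le_bigB hS hu)
    exact hpD (heq ▸ hmem)
  · -- v and its copy are not adjacent after the split
    rintro ⟨hne, S, hS, u, hu, w, hw, hadj, ha, hb⟩
    obtain ⟨heq, -⟩ := nmF_high hb.symm (le_bigB hS hw)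
    have hSS : S = S₀ := congrArg Prod.snd heq
    obtain ⟨huv, hnotin⟩ := nmF_low ha.symm hvB
    exact hnotin (by rw [huv, hSS]; exact Finset.mem_insert_self (v, S₀) D)
  · -- middle vertices unaffected
    intro x y hxv hxc hyv hyc
    constructor
    · rintro ⟨hne, S, hS, u, hu, w, hw, hadj, ha, hb⟩
      have hup : (u, S) ≠ (v, S₀) := by
        intro hh
        have h1 : u = v := congrArg Prod.fst hh
        have h2 : S = S₀ := congrArg Prod.snd hh
        exact hxc (by rw [ha, h1, h2, nmF_of_mem (Finset.mem_insert_self _ _)])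
      have hwp : (w, S) ≠ (v, S₀) := by
        intro hh
        have h1 : w = v := congrArg Prod.fst hh
        have h2 : S = S₀ := congrArg Prod.snd hh
        exact hyc (by rw [hb, h1, h2, nmF_of_mem (Finset.mem_insert_self _ _)])
      rw [nmF_insert_ne hup] at ha
      rw [nmF_insert_ne hwp] at hb
      exact ⟨hne, S, hS, u, hu, w, hw, hadj, ha, hb⟩
    · rintro ⟨hne, S, hS, u, hu, w, hw, hadj, ha, hb⟩
      have hup : (u, S) ≠ (v, S₀) := by
        intro hh
        have h1 : u = v := congrArg Prod.fst hh
        have h2 : S = S₀ := congrArg Prod.snd hh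
        rw [h1, h2, nmF_of_not_mem hpD] at ha
        exact hxv ha
      have hwp : (w, S) ≠ (v, S₀) := by
        intro hh
        have h1 : w = v := congrArg Prod.fst hh
        have h2 : S = S₀ := congrArg Prod.snd hh
        rw [h1, h2, nmF_of_not_mem hpD] at hb
        exact hyv hb
      rw [← nmF_insert_ne (D := D) hup] at ha
      rw [← nmF_insert_ne (D := D) hwp] at hb
      exact ⟨hne, S, hS, u, hu, w, hw, hadj, ha, hb⟩
  · -- the union condition
    intro x hxv hxc
    constructor
    · rintro (⟨hne, S, hS, u, hu, w, hw, hadj, ha, hb⟩ | ⟨hne, S, hS, u, hu, w, hw, hadj, ha, hb⟩)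
      · -- H.Adj v x  (here a = v)
        obtain ⟨huv, hnotin'⟩ := nmF_low ha.symm hvB
        have hup : (u, S) ≠ (v, S₀) := fun hh => hnotin'
          (by rw [hh]; exact Finset.mem_insert_self _ _)
        have hSS : S ≠ S₀ := by
          intro hh
          exact hup (by rw [huv, hh])
        have hwp : (w, S) ≠ (v, S₀) := fun hh => hSS (congrArg Prod.snd hh)
        rw [nmF_insert_ne hup] at ha
        rw [nmF_insert_ne hwp] at hb
        exact ⟨hne, S, hS, u, hu, w, hw, hadj, ha, hb⟩
      · -- H.Adj c x  (here a = cname)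
        obtain ⟨heq, -⟩ := nmF_high ha.symm (le_bigB hS hu)
        have huv : u = v := congrArg Prod.fst heq
        have hSS : S = S₀ := congrArg Prod.snd heq
        have hwp : (w, S) ≠ (v, S₀) := by
          intro hh
          have h1 : w = v := congrArg Prod.fst hh
          have h2 : S = S₀ := congrArg Prod.snd hh
          exact hxc (by rw [hb, h1, h2, nmF_of_mem (Finset.mem_insert_self _ _)])
        rw [nmF_insert_ne hwp] at hb
        refine ⟨?_, S, hS, u, hu, w, hw, hadj, ?_, hb⟩
        · -- v ≠ x
          intro hvx
          rw [← hvx] at hb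
          obtain ⟨hwv, -⟩ := nmF_low hb.symm hvB
          exact hadj.ne (by rw [huv, hwv])
        · rw [nmF_of_not_mem (by rw [huv, hSS]; exact hpD), huv]
    · rintro ⟨hne, S, hS, u, hu, w, hw, hadj, ha, hb⟩
      obtain ⟨huv, hnotinD⟩ := nmF_low ha.symm hvB
      by_cases hSS : S = S₀
      · right
        rw [hSS] at hb hw hnotinD
        rw [huv] at hadj hnotinD
        have hwp : (w, S₀) ≠ (v, S₀) := by
          intro hh
          have h1 : w = v := congrArg Prod.fst hh
          rw [h1, nmF_of_not_mem hnotinD] at hb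
          exact hxv hb
        refine ⟨fun hh => hxc hh.symm, S₀, hS₀C, v, hvS₀, w, hw, hadj, ?_, ?_⟩
        · rw [nmF_of_mem (Finset.mem_insert_self (v, S₀) D)]
        · rw [hb, nmF_insert_ne hwp]
      · left
        have hup : (u, S) ≠ (v, S₀) := fun hh => hSS (congrArg Prod.snd hh)
        have hwp : (w, S) ≠ (v, S₀) := fun hh => hSS (congrArg Prod.snd hh)
        refine ⟨hne, S, hS, u, hu, w, hw, hadj, ?_, ?_⟩
        · rw [nmF_insert_ne hup, nmF_of_not_mem hnotinD, huv]
        · rw [hb, nmF_insert_ne hwp]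

lemma split_chain (G : SimpleGraph ℕ) (C : Finset (Finset ℕ)) :
    ∀ (l : List (ℕ × Finset ℕ)) (D : Finset (ℕ × Finset ℕ)), l.Nodup →
    (∀ p ∈ l, p ∈ pairsP C ∧ p ∉ D) →
    OpsApply (l.map (fun p => Op.split p.1 (cname C p))) (graphAt G C D)
      (graphAt G C (D ∪ l.toFinset)) := by
  intro l
  induction l with
  | nil =>
    intro D _ _
    show graphAt G C (D ∪ (List.nil : List (ℕ × Finset ℕ)).toFinset) = graphAt G C D
    rw [List.toFinset_nil, Finset.union_empty]
  | cons p l ih =>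
    intro D hnd hmem
    refine ⟨graphAt G C (insert p D), split_step G C D (hmem p (List.mem_cons_self)).1
      (hmem p (List.mem_cons_self)).2, ?_⟩
    have h2 : ∀ q ∈ l, q ∈ pairsP C ∧ q ∉ insert p D := by
      intro q hq
      refine ⟨(hmem q (List.mem_cons_of_mem p hq)).1, ?_⟩
      rw [Finset.mem_insert]
      push_neg
      exact ⟨fun hh => (List.nodup_cons.mp hnd).1 (hh ▸ hq),
        (hmem q (List.mem_cons_of_mem p hq)).2⟩
    have := ih (insert p D) (List.nodup_cons.mp hnd).2 h2
    have heq : insert p D ∪ l.toFinset = D ∪ (p :: l).toFinset := by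
      ext q
      simp only [Finset.mem_union, Finset.mem_insert, List.toFinset_cons, List.mem_toFinset]
      tauto
    rwa [heq] at this

lemma delete_chain : ∀ (es : List (Sym2 ℕ)) (G₀ : SimpleGraph ℕ), es.Nodup →
    (∀ e ∈ es, e ∈ G₀.edgeSet) →
    OpsApply (es.map (fun e => Op.del (Quot.out e).1 (Quot.out e).2)) G₀
      (G₀.deleteEdges {e | e ∈ es}) := by
  intro es
  induction es with
  | nil =>
    intro G₀ _ _
    show G₀.deleteEdges {e | e ∈ ([] : List (Sym2 ℕ))} = G₀
    have : {e : Sym2 ℕ | e ∈ ([] : List (Sym2 ℕ))} = ∅ := by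
      ext e; simp
    rw [this, SimpleGraph.deleteEdges_empty]
  | cons e es ih =>
    intro G₀ hnd hmem
    have hout : s((Quot.out e).1, (Quot.out e).2) = e := Quot.out_eq e
    refine ⟨G₀.deleteEdges {e}, ⟨?_, by rw [hout]⟩, ?_⟩
    · rw [← SimpleGraph.mem_edgeSet, hout]
      exact hmem e (List.mem_cons_self)
    · have h2 := ih (G₀.deleteEdges {e}) (List.nodup_cons.mp hnd).2 ?_
      · have heq : (G₀.deleteEdges {e}).deleteEdges {x | x ∈ es} =
            G₀.deleteEdges {x | x ∈ e :: es} := by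
          rw [SimpleGraph.deleteEdges_deleteEdges]
          congr 1
          ext x
          simp only [Set.mem_union, Set.mem_singleton_iff, Set.mem_setOf_eq, List.mem_cons]
        rwa [heq] at h2
      · intro e' he'
        rw [SimpleGraph.edgeSet_deleteEdges]
        refine ⟨hmem e' (List.mem_cons_of_mem e he'), ?_⟩
        simp only [Set.mem_singleton_iff]
        exact fun hh => (List.nodup_cons.mp hnd).1 (hh ▸ he')

lemma graphAt_empty (G : SimpleGraph ℕ) (C : Finset (Finset ℕ)) :
    graphAt G C ∅ = G.deleteEdges {e | e ∈ G.edgeSet ∧ ¬ ∃ S ∈ C, ∀ x ∈ e, x ∈ S} := by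
  ext a b
  rw [SimpleGraph.deleteEdges_adj]
  constructor
  · rintro ⟨hne, S, hS, u, hu, w, hw, hadj, ha, hb⟩
    rw [nmF_of_not_mem (Finset.notMem_empty _)] at ha hb
    subst ha; subst hb
    refine ⟨hadj, ?_⟩
    rintro ⟨hE, hnc⟩
    exact hnc ⟨S, hS, fun x hx => by
      rcases Sym2.mem_iff.mp hx with rfl | rfl
      exacts [hu, hw]⟩
  · rintro ⟨hadj, hnd⟩
    have hcov : ∃ S ∈ C, ∀ x ∈ s(a, b), x ∈ S := by
      by_contra hnc
      exact hnd ⟨G.mem_edgeSet.mpr hadj, hnc⟩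
    obtain ⟨S, hS, hall⟩ := hcov
    exact ⟨hadj.ne, S, hS, a, hall a (by simp), b, hall b (by simp), hadj,
      (nmF_of_not_mem (Finset.notMem_empty _)).symm,
      (nmF_of_not_mem (Finset.notMem_empty _)).symm⟩

lemma nmP_inj {C : Finset (Finset ℕ)} {u u' : ℕ} {S S' : Finset ℕ}
    (hS : S ∈ C) (hu : u ∈ S) (hS' : S' ∈ C) (hu' : u' ∈ S')
    (h : nmF C (pairsP C) u S = nmF C (pairsP C) u' S') : u = u' ∧ S = S' :=
  nmF_inj hS hu hS' hu' (fun q h1 h2 h3 => mem_pairsP.mpr ⟨h1, h2, h3⟩) h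

lemma walk_in_block {G : SimpleGraph ℕ} {C : Finset (Finset ℕ)} {S : Finset ℕ} (hS : S ∈ C) :
    ∀ {x y : ℕ} (p : (graphAt G C (pairsP C)).Walk x y),
      (∃ x₀ ∈ S, x = nmF C (pairsP C) x₀ S) → ∃ y₀ ∈ S, y = nmF C (pairsP C) y₀ S := by
  intro x y p
  induction p with
  | nil => exact id
  | cons h p ih =>
    rintro ⟨x₀, hx₀, rfl⟩
    obtain ⟨hne, T, hT, u, hu, w, hw, hadj, ha, hb⟩ := h
    obtain ⟨hxu, hST⟩ := nmP_inj hS hx₀ hT hu ha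
    subst hST
    exact ih ⟨w, hw, hb⟩

lemma graphAtP_2club {G : SimpleGraph ℕ} {C : Finset (Finset ℕ)} (hC : Is2ClubCover G C) :
    Is2ClubGraph (graphAt G C (pairsP C)) := by
  intro a b hr
  obtain ⟨p⟩ := hr
  cases p with
  | nil => rw [SimpleGraph.dist_self]; omega
  | @cons _ c _ h q =>
    obtain ⟨hne, S, hS, u, hu, w, hw, hadj, ha, hb⟩ := h
    have hblock : ∃ b₀ ∈ S, b = nmF C (pairsP C) b₀ S := by
      refine walk_in_block hS (SimpleGraph.Walk.cons ?_ q) ⟨u, hu, ha⟩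
      exact ⟨hne, S, hS, u, hu, w, hw, hadj, ha, hb⟩
    obtain ⟨b₀, hb₀, rfl⟩ := hblock
    have hclub := hC.2 S hS u (Finset.mem_coe.mpr hu) b₀ (Finset.mem_coe.mpr hb₀)
    have hK : ∀ x y, x ∈ (↑S : Set ℕ) → (inducedOn G ↑S).Adj x y → y ∈ (↑S : Set ℕ) :=
      fun x y _ hxy => hxy.2.2
    have hf : ∀ x y, x ∈ (↑S : Set ℕ) → y ∈ (↑S : Set ℕ) → (inducedOn G ↑S).Adj x y →
        (graphAt G C (pairsP C)).Adj (nmF C (pairsP C) x S) (nmF C (pairsP C) y S) := by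
      intro x y hx hy hxy
      refine ⟨?_, S, hS, x, Finset.mem_coe.mp hx, y, Finset.mem_coe.mp hy, hxy.1, rfl, rfl⟩
      intro hh
      exact hxy.1.ne (nmP_inj hS (Finset.mem_coe.mp hx) hS (Finset.mem_coe.mp hy) hh).1
    have hmain := reach_dist_le (fun t => nmF C (pairsP C) t S) (↑S : Set ℕ) hK hf
      (Finset.mem_coe.mpr hu) hclub.1
    rw [← ha] at hmain
    exact le_trans hmain.2 hclub.2

lemma pairsP_card (C : Finset (Finset ℕ)) :
    (pairsP C).card = ∑ v ∈ C.sup id, ((C.filter (fun S => v ∈ S)).card - 1) := by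
  classical
  rw [Finset.card_eq_sum_card_fiberwise (f := Prod.fst) (t := C.sup id)
    (fun p hp => by
      obtain ⟨h1, h2, _⟩ := mem_pairsP.mp hp
      exact Finset.mem_sup.mpr ⟨p.2, h1, h2⟩)]
  apply Finset.sum_congr rfl
  intro v hv
  have himg : (pairsP C).filter (fun p => p.1 = v) =
      ((C.filter (fun S => v ∈ S)).erase (canS C v)).image (fun S => (v, S)) := by
    ext q
    simp only [Finset.mem_filter, Finset.mem_image, Finset.mem_erase, mem_pairsP]
    constructor
    · rintro ⟨⟨h1, h2, h3⟩, h4⟩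
      exact ⟨q.2, ⟨by rw [← h4]; exact h3, h1, by rw [← h4]; exact h2⟩,
        Prod.ext h4.symm rfl⟩
    · rintro ⟨S, ⟨hne, hSC, hvS⟩, rfl⟩
      exact ⟨⟨hSC, hvS, hne⟩, rfl⟩
  rw [himg, Finset.card_image_of_injective _
    (fun S T h => ((Prod.mk.injEq _ _ _ _).mp h).2), Finset.card_erase_of_mem]
  obtain ⟨S, hS, hvS⟩ := Finset.mem_sup.mp hv
  have := canS_spec ⟨S, hS, hvS⟩
  exact Finset.mem_filter.mpr ⟨this.1, this.2⟩

lemma coverToOps {G : SimpleGraph ℕ} {C : Finset (Finset ℕ)} (hC : Is2ClubCover G C)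
    (hfin : G.support.Finite) :
    ∃ l H, l.length = coverCost G C ∧ OpsApply l G H ∧ Is2ClubGraph H := by
  classical
  set uncovF : Finset (Sym2 ℕ) := (edgeSet_finite_of_support hfin).toFinset.filter
    (fun e => ¬ ∃ S ∈ C, ∀ x ∈ e, x ∈ S) with huncovF
  have huncov : {e : Sym2 ℕ | e ∈ G.edgeSet ∧ ¬ ∃ S ∈ C, ∀ x ∈ e, x ∈ S} = ↑uncovF := by
    ext e
    simp [huncovF, Set.Finite.mem_toFinset]
  set es := uncovF.toList with hes
  have hdel : OpsApply (es.map (fun e => Op.del (Quot.out e).1 (Quot.out e).2)) G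
      (G.deleteEdges {e | e ∈ es}) :=
    delete_chain es G (Finset.nodup_toList _) (fun e he => by
      have h := Finset.mem_toList.mp he
      rw [huncovF, Finset.mem_filter, Set.Finite.mem_toFinset] at h
      exact h.1)
  have hdel' : G.deleteEdges {e | e ∈ es} = graphAt G C ∅ := by
    rw [graphAt_empty G C, huncov]
    congr 1
    ext e
    simp [hes]
  have hsplit : OpsApply ((pairsP C).toList.map (fun p => Op.split p.1 (cname C p)))
      (graphAt G C ∅) (graphAt G C (pairsP C)) := by
    have h := split_chain G C (pairsP C).toList ∅ (Finset.nodup_toList _)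
      (fun p hp => ⟨Finset.mem_toList.mp hp, Finset.notMem_empty p⟩)
    rwa [Finset.empty_union, Finset.toList_toFinset] at h
  refine ⟨_ ++ _, graphAt G C (pairsP C), ?_, opsApply_append (hdel' ▸ hdel) hsplit,
    graphAtP_2club hC⟩
  rw [List.length_append, List.length_map, List.length_map, Finset.length_toList,
    Finset.length_toList, coverCost, pairsP_card, huncov, Set.ncard_coe_finset]
  omega

lemma coverFromInv {G H : SimpleGraph ℕ} (hfin : G.support.Finite) (h2 : Is2ClubGraph H)
    (ρ : ℕ → ℕ) (F : Finset ℕ) (hFid : ∀ x, x ∉ F → ρ x = x)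
    (hproj : ∀ a b, H.Adj a b → G.Adj (ρ a) (ρ b)) :
    ∃ C : Finset (Finset ℕ), Is2ClubCover G C ∧
      coverCost G C ≤ (lostSet G H ρ).ncard + F.card := by
  classical
  have hHsupfin : H.support.Finite := by
    apply (hfin.union F.finite_toSet).subset
    rintro a ⟨b, hab⟩
    by_cases haF : a ∈ F
    · exact Or.inr haF
    · left
      have h := hproj a b hab
      rw [hFid a haF] at h
      exact ⟨_, h⟩
  set SH : Finset ℕ := hHsupfin.toFinset with hSH
  have memSH : ∀ a, a ∈ SH ↔ a ∈ H.support := fun a => Set.Finite.mem_toFinset _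
  set comp : ℕ → Finset ℕ := fun a => SH.filter (fun b => H.Reachable a b) with hcomp
  have mem_comp : ∀ a b, b ∈ comp a ↔ b ∈ SH ∧ H.Reachable a b := by
    intro a b; simp [hcomp]
  have comp_eq : ∀ a b, b ∈ comp a → comp b = comp a := by
    intro a b hb
    rw [mem_comp] at hb
    ext c
    rw [mem_comp, mem_comp]
    exact and_congr_right fun _ => ⟨fun h => hb.2.trans h, fun h => hb.2.symm.trans h⟩
  set C₁ : Finset (Finset ℕ) := SH.image (fun a => (comp a).image ρ) with hC₁
  set C₂ : Finset (Finset ℕ) :=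
    (hfin.toFinset.filter (fun v => ¬ ∃ T ∈ C₁, v ∈ T)).image (fun v => {v}) with hC₂
  set C : Finset (Finset ℕ) := C₁ ∪ C₂ with hC
  -- witness property for C₁ sets
  have f4 : ∀ S ∈ C₁, ∀ v ∈ S, ∃ x, x ∈ SH ∧ ρ x = v ∧ (comp x).image ρ = S := by
    intro S hS v hv
    rw [hC₁, Finset.mem_image] at hS
    obtain ⟨a, haSH, rfl⟩ := hS
    rw [Finset.mem_image] at hv
    obtain ⟨x, hx, rfl⟩ := hv
    exact ⟨x, (Finset.mem_filter.mp hx).1, rfl, by rw [comp_eq a x hx]⟩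
  have comp_self : ∀ a ∈ SH, a ∈ comp a := by
    intro a ha
    rw [mem_comp]
    exact ⟨ha, Reachable.refl a⟩
  -- each C₁ set is a 2-club
  have club1 : ∀ S ∈ C₁, Inducing2Club G (↑S : Set ℕ) := by
    intro S hS
    rw [hC₁, Finset.mem_image] at hS
    obtain ⟨a, haSH, rfl⟩ := hS
    intro u hu v hv
    rw [Finset.coe_image, Set.mem_image] at hu hv
    obtain ⟨x, hx, rfl⟩ := hu
    obtain ⟨y, hy, rfl⟩ := hv
    rw [Finset.mem_coe, mem_comp] at hx hy
    have hK : ∀ x y, x ∈ (↑(comp a) : Set ℕ) → H.Adj x y → y ∈ (↑(comp a) : Set ℕ) := by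
      intro x y hx hxy
      rw [Finset.mem_coe, mem_comp] at hx ⊢
      exact ⟨(memSH y).mpr ⟨_, hxy.symm⟩, hx.2.trans hxy.reachable⟩
    have hf : ∀ x y, x ∈ (↑(comp a) : Set ℕ) → y ∈ (↑(comp a) : Set ℕ) → H.Adj x y →
        (inducedOn G ↑((comp a).image ρ)).Adj (ρ x) (ρ y) := by
      intro x y hx hy hxy
      refine ⟨hproj x y hxy, ?_, ?_⟩
      · rw [Finset.coe_image]; exact Set.mem_image_of_mem ρ hx
      · rw [Finset.coe_image]; exact Set.mem_image_of_mem ρ hy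
    have hreach : H.Reachable x y := hx.2.symm.trans hy.2
    have := reach_dist_le ρ (↑(comp a) : Set ℕ) hK hf
      (Finset.mem_coe.mpr ((mem_comp a x).mpr hx)) hreach
    exact ⟨this.1, le_trans this.2 (h2 x y hreach)⟩
  refine ⟨C, ⟨?_, ?_⟩, ?_⟩
  · -- covering
    intro v hv
    by_cases hvC : ∃ T ∈ C₁, v ∈ T
    · obtain ⟨T, hT, hvT⟩ := hvC
      exact ⟨T, Finset.mem_union_left _ hT, hvT⟩
    · refine ⟨{v}, Finset.mem_union_right _ ?_, Finset.mem_singleton_self v⟩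
      rw [hC₂, Finset.mem_image]
      exact ⟨v, Finset.mem_filter.mpr ⟨hfin.mem_toFinset.mpr hv, hvC⟩, rfl⟩
  · -- 2-clubs
    intro S hS
    rw [hC, Finset.mem_union] at hS
    rcases hS with hS | hS
    · exact club1 S hS
    · rw [hC₂, Finset.mem_image] at hS
      obtain ⟨w, _, rfl⟩ := hS
      intro u hu v hv
      rw [Finset.coe_singleton, Set.mem_singleton_iff] at hu hv
      subst hu; subst hv
      exact ⟨Reachable.refl _, by rw [SimpleGraph.dist_self]; omega⟩
  · -- cost bound
    have edgeb : {e : Sym2 ℕ | e ∈ G.edgeSet ∧ ¬ ∃ S ∈ C, ∀ x ∈ e, x ∈ S} ⊆ lostSet G H ρ := by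
      rintro e ⟨heE, hnc⟩
      refine ⟨heE, ?_⟩
      intro a b hab hmap
      apply hnc
      have haSH : a ∈ SH := (memSH a).mpr ⟨b, hab⟩
      refine ⟨(comp a).image ρ, Finset.mem_union_left _ (Finset.mem_image_of_mem _ haSH), ?_⟩
      intro x hx
      rw [← hmap, Sym2.map_pair_eq, Sym2.mem_iff] at hx
      rcases hx with rfl | rfl
      · exact Finset.mem_image_of_mem ρ (comp_self a haSH)
      · refine Finset.mem_image_of_mem ρ ?_
        rw [mem_comp]
        exact ⟨(memSH b).mpr ⟨a, hab.symm⟩, hab.reachable⟩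
    have hlostfin : (lostSet G H ρ).Finite :=
      (edgeSet_finite_of_support hfin).subset (fun e he => he.1)
    have edgecard : {e : Sym2 ℕ | e ∈ G.edgeSet ∧ ¬ ∃ S ∈ C, ∀ x ∈ e, x ∈ S}.ncard ≤
        (lostSet G H ρ).ncard := Set.ncard_le_ncard edgeb hlostfin
    -- vertex part
    set fib : ℕ → Finset ℕ := fun v => F.filter (fun x => ρ x = v ∧ x ≠ v) with hfib
    have vertb : ∀ v ∈ C.sup id, (C.filter (fun S => v ∈ S)).card - 1 ≤ (fib v).card := by
      intro v _
      by_cases hvC : ∃ T ∈ C₁, v ∈ T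
      · have hsub : C.filter (fun S => v ∈ S) ⊆ C₁.filter (fun S => v ∈ S) := by
          intro S hS
          rw [Finset.mem_filter] at hS
          rw [hC, Finset.mem_union] at hS
          rcases hS.1 with h | h
          · exact Finset.mem_filter.mpr ⟨h, hS.2⟩
          · exfalso
            rw [hC₂, Finset.mem_image] at h
            obtain ⟨w, hw, rfl⟩ := h
            rw [Finset.mem_singleton] at hS
            exact (Finset.mem_filter.mp hw).2 (hS.2 ▸ hvC)
        have hinj : (C₁.filter (fun S => v ∈ S)).card ≤ (insert v (fib v)).card := by
          apply Finset.card_le_card_of_injOn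
            (fun S => if h : ∃ x, x ∈ SH ∧ ρ x = v ∧ (comp x).image ρ = S then h.choose else 0)
          · intro S hS
            simp only [Finset.mem_coe, Finset.mem_filter] at hS ⊢
            have hex : ∃ x, x ∈ SH ∧ ρ x = v ∧ (comp x).image ρ = S := f4 S hS.1 v hS.2
            rw [dif_pos hex]
            obtain ⟨hx1, hx2, hx3⟩ := hex.choose_spec
            by_cases hxv : hex.choose = v
            · rw [hxv]; exact Finset.mem_insert_self _ _
            · refine Finset.mem_insert_of_mem ?_
              rw [hfib, Finset.mem_filter]
              refine ⟨?_, hx2, hxv⟩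
              by_contra hnF
              exact hxv ((hFid _ hnF).symm.trans hx2)
          · intro S hS T hT hST
            rw [Finset.mem_coe, Finset.mem_filter] at hS hT
            dsimp only at hST
            have hexS : ∃ x, x ∈ SH ∧ ρ x = v ∧ (comp x).image ρ = S := f4 S hS.1 v hS.2
            have hexT : ∃ x, x ∈ SH ∧ ρ x = v ∧ (comp x).image ρ = T := f4 T hT.1 v hT.2
            rw [dif_pos hexS, dif_pos hexT] at hST
            rw [← hexS.choose_spec.2.2, ← hexT.choose_spec.2.2, hST]
        have : (C.filter (fun S => v ∈ S)).card ≤ (fib v).card + 1 := by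
          calc (C.filter (fun S => v ∈ S)).card ≤ (C₁.filter (fun S => v ∈ S)).card :=
                Finset.card_le_card hsub
            _ ≤ (insert v (fib v)).card := hinj
            _ ≤ (fib v).card + 1 := Finset.card_insert_le _ _
        omega
      · have hsub : C.filter (fun S => v ∈ S) ⊆ {({v} : Finset ℕ)} := by
          intro S hS
          rw [Finset.mem_filter] at hS
          rw [hC, Finset.mem_union] at hS
          rcases hS.1 with h | h
          · exact absurd ⟨S, h, hS.2⟩ hvC
          · rw [hC₂, Finset.mem_image] at h
            obtain ⟨w, _, rfl⟩ := h
            rw [Finset.mem_singleton] at hS ⊢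
            rw [hS.2]
        have := Finset.card_le_card hsub
        simp only [Finset.card_singleton] at this
        omega
    have sumb : (∑ v ∈ C.sup id, ((C.filter (fun S => v ∈ S)).card - 1)) ≤ F.card := by
      calc (∑ v ∈ C.sup id, ((C.filter (fun S => v ∈ S)).card - 1))
          ≤ ∑ v ∈ C.sup id, (fib v).card := Finset.sum_le_sum vertb
        _ = ((C.sup id).biUnion fib).card := by
            rw [Finset.card_biUnion]
            intro a _ b _ hab
            rw [Function.onFun, Finset.disjoint_left]
            intro x hx hx2
            rw [hfib, Finset.mem_filter] at hx hx2
            exact hab (hx.2.1 ▸ hx2.2.1)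
        _ ≤ F.card := by
            apply Finset.card_le_card
            intro x hx
            rw [Finset.mem_biUnion] at hx
            obtain ⟨a, _, hx⟩ := hx
            exact (Finset.mem_filter.mp hx).1
    rw [coverCost]
    omega


theorem stmt5 (G : SimpleGraph ℕ) (hfin : G.support.Finite) :
    sInf {c | ∃ C : Finset (Finset ℕ), Is2ClubCover G C ∧ coverCost G C = c} =
      twoCcedvs G := by
  classical
  have hcov0 : ∃ C : Finset (Finset ℕ), Is2ClubCover G C := by
    refine ⟨hfin.toFinset.image (fun v => {v}), ?_, ?_⟩
    · intro v hv
      exact ⟨{v}, Finset.mem_image_of_mem _ (hfin.mem_toFinset.mpr hv),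
        Finset.mem_singleton_self v⟩
    · intro S hS
      rw [Finset.mem_image] at hS
      obtain ⟨w, -, rfl⟩ := hS
      intro u hu v hv
      rw [Finset.coe_singleton, Set.mem_singleton_iff] at hu hv
      subst hu; subst hv
      exact ⟨Reachable.refl _, by rw [SimpleGraph.dist_self]; omega⟩
  obtain ⟨C₀, hC₀⟩ := hcov0
  have hAne : {c | ∃ C : Finset (Finset ℕ), Is2ClubCover G C ∧ coverCost G C = c}.Nonempty :=
    ⟨coverCost G C₀, C₀, hC₀, rfl⟩
  obtain ⟨C₁, hC₁, hc₁⟩ := Nat.sInf_mem hAne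
  obtain ⟨l₁, H₁, hlen₁, happ₁, hclub₁⟩ := coverToOps hC₁ hfin
  have h1 : twoCcedvs G ≤ sInf {c | ∃ C, Is2ClubCover G C ∧ coverCost G C = c} := by
    apply Nat.sInf_le
    exact ⟨l₁, H₁, by rw [hlen₁, hc₁], happ₁, hclub₁⟩
  have hKne : {k | ∃ l H, l.length = k ∧ OpsApply l G H ∧ Is2ClubGraph H}.Nonempty :=
    ⟨l₁.length, l₁, H₁, rfl, happ₁, hclub₁⟩
  have hKmem : twoCcedvs G ∈ {k | ∃ l H, l.length = k ∧ OpsApply l G H ∧ Is2ClubGraph H} := by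
    rw [twoCcedvs]
    exact Nat.sInf_mem hKne
  obtain ⟨l₂, H₂, hlen₂, happ₂, hclub₂⟩ := hKmem
  obtain ⟨ρ, F, h3, hproj, hcount⟩ := opsInv l₂ G H₂ happ₂ hfin
  obtain ⟨C₂, hC₂cov, hC₂cost⟩ := coverFromInv hfin hclub₂ ρ F h3 hproj
  have h2 : sInf {c | ∃ C, Is2ClubCover G C ∧ coverCost G C = c} ≤ twoCcedvs G := by
    calc sInf {c | ∃ C, Is2ClubCover G C ∧ coverCost G C = c}
        ≤ coverCost G C₂ := Nat.sInf_le ⟨C₂, hC₂cov, rfl⟩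
      _ ≤ (lostSet G H₂ ρ).ncard + F.card := hC₂cost
      _ ≤ l₂.length := hcount
      _ = twoCcedvs G := hlen₂
  exact le_antisymm h2 h1
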